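/- Let L be a graded semiprime graded subalgebra of a G-graded Lie algebra Q = ⊕_{σ∈G} Q_σ. If Q is a graded algebra of quotients of L, then Q is an algebra of quotients of L (in the non-graded sense). -/

import Mathlib

/-- The set of iterated adjoint actions of elements of the subalgebra `L` on `q`,
i.e. `q` together with all elements `ad x₁ ⋯ ad xₙ (q)` with `x₁, …, xₙ ∈ L`. -/
inductive AdOrbit {Φ : Type*} [CommRing Φ] {Q : Type*} [LieRing Q] [LieAlgebra Φ Q]
    (L : LieSubalgebra Φ Q) (q : Q) : Q → Prop
  | base : AdOrbit L q q
  | step (x : Q) (hx : x ∈ L) {y : Q} (hy : AdOrbit L q y) : AdOrbit L q ⁅x, y⁆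

/-- `_L(q)`: the `Φ`-linear span in `Q` of `q` together with all elements
`ad x₁ ⋯ ad xₙ (q)` with `x₁, …, xₙ ∈ L`. -/
def lSpan (Φ : Type*) [CommRing Φ] {Q : Type*} [LieRing Q] [LieAlgebra Φ Q]
    (L : LieSubalgebra Φ Q) (q : Q) : Submodule Φ Q :=
  Submodule.span Φ {y | AdOrbit L q y}

set_option linter.unusedSectionVars false
set_option maxHeartbeats 1000000

section Aux

variable {Φ : Type*} [CommRing Φ] {G : Type*} [CommGroup G] [DecidableEq G]
  {Q : Type*} [LieRing Q] [LieAlgebra Φ Q]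

lemma lSpan_lie_mem (L : LieSubalgebra Φ Q) {x : Q} (hx : x ∈ L) {q y : Q}
    (hy : y ∈ lSpan Φ L q) : ⁅x, y⁆ ∈ lSpan Φ L q := by
  induction hy using Submodule.span_induction with
  | mem z hz => exact Submodule.subset_span (AdOrbit.step x hx hz)
  | zero => rw [lie_zero]; exact zero_mem _
  | add a b _ _ ha hb => rw [lie_add]; exact add_mem ha hb
  | smul r a _ ha => rw [lie_smul]; exact Submodule.smul_mem _ r ha

lemma adOrbit_mem_subalg (L : LieSubalgebra Φ Q) {u w : Q} (hu : u ∈ L)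
    (hw : AdOrbit L u w) : w ∈ L := by
  induction hw with
  | base => exact hu
  | step x hx _ ih => exact L.lie_mem hx ih

lemma adOrbit_lSpan_mem (L : LieSubalgebra Φ Q) {p u w : Q} (hu : u ∈ lSpan Φ L p)
    (hw : AdOrbit L u w) : w ∈ lSpan Φ L p := by
  induction hw with
  | base => exact hu
  | step x hx _ ih => exact lSpan_lie_mem L hx ih

/-- Taking the `ρ`-component, as a linear map `Q →ₗ[Φ] Q`. -/
def compMap (𝒜 : G → Submodule Φ Q) [DirectSum.Decomposition 𝒜] (ρ : G) : Q →ₗ[Φ] Q :=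
  (𝒜 ρ).subtype ∘ₗ (DFinsupp.lapply ρ) ∘ₗ (DirectSum.decomposeLinearEquiv 𝒜).toLinearMap

@[simp] lemma compMap_apply (𝒜 : G → Submodule Φ Q) [DirectSum.Decomposition 𝒜] (ρ : G)
    (y : Q) : compMap 𝒜 ρ y = (DirectSum.decompose 𝒜 y ρ : Q) := rfl

lemma bc (𝒜 : G → Submodule Φ Q) [DirectSum.Decomposition 𝒜]
    (hbracket : ∀ (σ τ : G) (x y : Q), x ∈ 𝒜 σ → y ∈ 𝒜 τ → ⁅x, y⁆ ∈ 𝒜 (σ * τ))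
    {y : Q} {β : G} (hy : y ∈ 𝒜 β) (x : Q) (σ : G) :
    ⁅(DirectSum.decompose 𝒜 x σ : Q), y⁆ = (DirectSum.decompose 𝒜 ⁅x, y⁆ (σ * β) : Q) := by
  refine DirectSum.Decomposition.inductionOn 𝒜
    (motive := fun x => ⁅(DirectSum.decompose 𝒜 x σ : Q), y⁆
      = (DirectSum.decompose 𝒜 ⁅x, y⁆ (σ * β) : Q)) ?_ ?_ ?_ x
  · simp
  · intro α m
    by_cases h : σ = α
    · subst h
      rw [DirectSum.decompose_of_mem_same 𝒜 m.2,
        DirectSum.decompose_of_mem_same 𝒜 (hbracket _ _ _ _ m.2 hy)]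
    · rw [DirectSum.decompose_of_mem_ne 𝒜 m.2 (Ne.symm h),
        DirectSum.decompose_of_mem_ne 𝒜 (hbracket _ _ _ _ m.2 hy)
          (fun e => h (mul_right_cancel e).symm), zero_lie]
  · intro a b ha hb
    have h1 : ∀ z : Q, (DirectSum.decompose 𝒜 z σ : Q) = compMap 𝒜 σ z := fun z => rfl
    have h2 : ∀ z : Q, (DirectSum.decompose 𝒜 z (σ * β) : Q) = compMap 𝒜 (σ * β) z :=
      fun z => rfl
    rw [h1, h2, add_lie, map_add, map_add, add_lie, ← h1 a, ← h1 b, ← h2, ← h2, ha, hb]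

lemma bcl (𝒜 : G → Submodule Φ Q) [DirectSum.Decomposition 𝒜]
    (hbracket : ∀ (σ τ : G) (x y : Q), x ∈ 𝒜 σ → y ∈ 𝒜 τ → ⁅x, y⁆ ∈ 𝒜 (σ * τ))
    {x : Q} {α : G} (hx : x ∈ 𝒜 α) (y : Q) (σ : G) :
    ⁅x, (DirectSum.decompose 𝒜 y σ : Q)⁆ = (DirectSum.decompose 𝒜 ⁅x, y⁆ (α * σ) : Q) := by
  have h := bc 𝒜 hbracket hx y σ
  calc ⁅x, (DirectSum.decompose 𝒜 y σ : Q)⁆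
      = -⁅(DirectSum.decompose 𝒜 y σ : Q), x⁆ := (lie_skew _ _).symm
    _ = -(DirectSum.decompose 𝒜 ⁅y, x⁆ (σ * α) : Q) := by rw [h]
    _ = (DirectSum.decompose 𝒜 (-⁅y, x⁆) (σ * α) : Q) := (map_neg (compMap 𝒜 (σ * α)) _).symm
    _ = (DirectSum.decompose 𝒜 ⁅x, y⁆ (α * σ) : Q) := by rw [lie_skew, mul_comm σ α]

lemma lSpan_decompose_mem (𝒜 : G → Submodule Φ Q) [DirectSum.Decomposition 𝒜]
    (hbracket : ∀ (σ τ : G) (x y : Q), x ∈ 𝒜 σ → y ∈ 𝒜 τ → ⁅x, y⁆ ∈ 𝒜 (σ * τ))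
    (L : LieSubalgebra Φ Q)
    (hLgr : ∀ x ∈ L, ∀ σ : G, (DirectSum.decompose 𝒜 x σ : Q) ∈ L)
    {τ : G} {qτ : Q} (hq : qτ ∈ 𝒜 τ) {y : Q} (hy : y ∈ lSpan Φ L qτ) :
    ∀ ρ : G, (DirectSum.decompose 𝒜 y ρ : Q) ∈ lSpan Φ L qτ := by
  classical
  induction hy using Submodule.span_induction with
  | mem z hz =>
    induction hz with
    | base =>
      intro ρ
      by_cases h : ρ = τ
      · subst h
        rw [DirectSum.decompose_of_mem_same 𝒜 hq]
        exact Submodule.subset_span AdOrbit.base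
      · rw [DirectSum.decompose_of_mem_ne 𝒜 hq (Ne.symm h)]
        exact zero_mem _
    | step x hx hzy ih =>
      intro ρ
      rename_i z'
      have hzsum := DirectSum.sum_support_decompose 𝒜 z'
      have hxz : ⁅x, z'⁆ = ∑ ρ' ∈ (DirectSum.decompose 𝒜 z').support,
          ⁅x, (DirectSum.decompose 𝒜 z' ρ' : Q)⁆ := by
        conv_lhs => rw [← hzsum]
        exact map_sum (LieAlgebra.ad Φ Q x) _ _
      have : (DirectSum.decompose 𝒜 ⁅x, z'⁆ ρ : Q)
          = compMap 𝒜 ρ ⁅x, z'⁆ := rfl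
      rw [this, hxz, map_sum]
      refine sum_mem fun ρ' _ => ?_
      have hterm : compMap 𝒜 ρ ⁅x, (DirectSum.decompose 𝒜 z' ρ' : Q)⁆
          = (DirectSum.decompose 𝒜 ⁅x, (DirectSum.decompose 𝒜 z' ρ' : Q)⁆ ((ρ * ρ'⁻¹) * ρ') : Q) := by
        rw [compMap_apply, inv_mul_cancel_right]
      rw [hterm, ← bc 𝒜 hbracket (SetLike.coe_mem _) x (ρ * ρ'⁻¹)]
      exact lSpan_lie_mem L (hLgr x hx _) (ih ρ')
  | zero => intro ρ; rw [show ((0:Q)) = (0:Q) from rfl, DirectSum.decompose_zero]; simp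
  | add a b _ _ ha hb =>
    intro ρ
    have : (DirectSum.decompose 𝒜 (a + b) ρ : Q) = compMap 𝒜 ρ (a + b) := rfl
    rw [this, map_add]
    exact add_mem (ha ρ) (hb ρ)
  | smul r a _ ha =>
    intro ρ
    have : (DirectSum.decompose 𝒜 (r • a) ρ : Q) = compMap 𝒜 ρ (r • a) := rfl
    rw [this, map_smul]
    exact Submodule.smul_mem _ r (ha ρ)

lemma ann_lSpan (L : LieSubalgebra Φ Q) {I : Submodule Φ Q}
    (had : ∀ x ∈ L, ∀ i ∈ I, ⁅x, i⁆ ∈ I) {p : Q}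
    (hkill : ∀ i ∈ I, ⁅i, p⁆ = 0) :
    ∀ i ∈ I, ∀ y ∈ lSpan Φ L p, ⁅i, y⁆ = 0 := by
  have horb : ∀ w, AdOrbit L p w → ∀ i ∈ I, ⁅i, w⁆ = 0 := by
    intro w hw
    induction hw with
    | base => exact hkill
    | step x hx hzy ih =>
      intro i hi
      have hix : ⁅i, x⁆ ∈ I := by
        rw [← lie_skew]
        exact neg_mem (had x hx i hi)
      rw [leibniz_lie, ih _ hix, ih i hi, lie_zero, add_zero]
  intro i hi y hy
  induction hy using Submodule.span_induction with
  | mem z hz => exact horb z hz i hi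
  | zero => exact lie_zero i
  | add a b _ _ ha hb => rw [lie_add, ha, hb, add_zero]
  | smul r a _ ha => rw [lie_smul, ha, smul_zero]

/-- The ad- and component-closure of an element: spans the graded ideal generated by `z`. -/
inductive GOrbit (𝒜 : G → Submodule Φ Q) [DirectSum.Decomposition 𝒜]
    (L : LieSubalgebra Φ Q) (z : Q) : Q → Prop
  | base : GOrbit 𝒜 L z z
  | step (x : Q) (hx : x ∈ L) {y : Q} (hy : GOrbit 𝒜 L z y) : GOrbit 𝒜 L z ⁅x, y⁆
  | comp (ρ : G) {y : Q} (hy : GOrbit 𝒜 L z y) : GOrbit 𝒜 L z (DirectSum.decompose 𝒜 y ρ : Q)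

lemma gOrbit_subset (𝒜 : G → Submodule Φ Q) [DirectSum.Decomposition 𝒜]
    (L : LieSubalgebra Φ Q) {z : Q} {I : Submodule Φ Q} (hz : z ∈ I)
    (had : ∀ x ∈ L, ∀ i ∈ I, ⁅x, i⁆ ∈ I)
    (hcomp : ∀ i ∈ I, ∀ ρ : G, (DirectSum.decompose 𝒜 i ρ : Q) ∈ I) :
    ∀ w, GOrbit 𝒜 L z w → w ∈ I := by
  intro w hw
  induction hw with
  | base => exact hz
  | step x hx _ ih => exact had x hx _ ih
  | comp ρ _ ih => exact hcomp _ ih ρ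

lemma gSpan_lie_mem (𝒜 : G → Submodule Φ Q) [DirectSum.Decomposition 𝒜]
    (L : LieSubalgebra Φ Q) (z : Q) {x : Q} (hx : x ∈ L) {y : Q}
    (hy : y ∈ Submodule.span Φ {w | GOrbit 𝒜 L z w}) :
    ⁅x, y⁆ ∈ Submodule.span Φ {w | GOrbit 𝒜 L z w} := by
  induction hy using Submodule.span_induction with
  | mem w hw => exact Submodule.subset_span (GOrbit.step x hx hw)
  | zero => rw [lie_zero]; exact zero_mem _
  | add a b _ _ ha hb => rw [lie_add]; exact add_mem ha hb
  | smul r a _ ha => rw [lie_smul]; exact Submodule.smul_mem _ r ha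

lemma gSpan_comp_mem (𝒜 : G → Submodule Φ Q) [DirectSum.Decomposition 𝒜]
    (L : LieSubalgebra Φ Q) (z : Q) {y : Q}
    (hy : y ∈ Submodule.span Φ {w | GOrbit 𝒜 L z w}) (ρ : G) :
    (DirectSum.decompose 𝒜 y ρ : Q) ∈ Submodule.span Φ {w | GOrbit 𝒜 L z w} := by
  induction hy using Submodule.span_induction with
  | mem w hw => exact Submodule.subset_span (GOrbit.comp ρ hw)
  | zero => rw [show ((0:Q)) = (0:Q) from rfl, DirectSum.decompose_zero]; simp
  | add a b _ _ ha hb =>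
    have : (DirectSum.decompose 𝒜 (a + b) ρ : Q) = compMap 𝒜 ρ (a + b) := rfl
    rw [this, map_add]
    exact add_mem ha hb
  | smul r a _ ha =>
    have : (DirectSum.decompose 𝒜 (r • a) ρ : Q) = compMap 𝒜 ρ (r • a) := rfl
    rw [this, map_smul]
    exact Submodule.smul_mem _ r ha

/-- `{x | ∀ y ∈ S, ⁅x, y⁆ ∈ L}` as a submodule. -/
def bracketInto (L : LieSubalgebra Φ Q) (S : Submodule Φ Q) : Submodule Φ Q where
  carrier := {x | ∀ y ∈ S, ⁅x, y⁆ ∈ L}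
  add_mem' := fun ha hb y hy => by rw [add_lie]; exact L.add_mem (ha y hy) (hb y hy)
  zero_mem' := fun y hy => by rw [zero_lie]; exact L.zero_mem
  smul_mem' := fun r x hx y hy => by rw [smul_lie]; exact L.smul_mem r (hx y hy)

@[simp] lemma mem_bracketInto {L : LieSubalgebra Φ Q} {S : Submodule Φ Q} {x : Q} :
    x ∈ bracketInto L S ↔ ∀ y ∈ S, ⁅x, y⁆ ∈ L := Iff.rfl

end Aux

/-- Let `L` be a graded semiprime graded subalgebra of a
`G`-graded Lie algebra `Q = ⊕_{σ∈G} Q_σ`.  If `Q` is a graded algebra of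
quotients of `L`, then `Q` is an algebra of quotients of `L` (in the non-graded
sense). -/
theorem graded_quotients_implies_quotients_of_graded_semiprime
    {Φ : Type*} [CommRing Φ] {G : Type*} [CommGroup G] [DecidableEq G]
    {Q : Type*} [LieRing Q] [LieAlgebra Φ Q]
    (𝒜 : G → Submodule Φ Q) [DirectSum.Decomposition 𝒜]
    (hbracket : ∀ (σ τ : G) (x y : Q), x ∈ 𝒜 σ → y ∈ 𝒜 τ → ⁅x, y⁆ ∈ 𝒜 (σ * τ))
    (L : LieSubalgebra Φ Q)
    (hLgr : ∀ x ∈ L, ∀ σ : G, (DirectSum.decompose 𝒜 x σ : Q) ∈ L)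
    -- `L` is graded semiprime:
    (hsemiprime : ∀ I : Submodule Φ Q, I ≤ L.toSubmodule →
      (∀ x ∈ L, ∀ y ∈ I, ⁅x, y⁆ ∈ I) →
      (∀ y ∈ I, ∀ σ : G, (DirectSum.decompose 𝒜 y σ : Q) ∈ I) →
      I ≠ ⊥ → ∃ a ∈ I, ∃ b ∈ I, ⁅a, b⁆ ≠ 0)
    -- `Q` is a graded algebra of quotients of `L`:
    (hquot : ∀ (σ τ : G) (p q : Q), p ∈ 𝒜 σ → p ≠ 0 → q ∈ 𝒜 τ →
      ∃ (α : G) (x : Q), x ∈ 𝒜 α ∧ x ∈ L ∧ ⁅x, p⁆ ≠ 0 ∧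
        ∀ y ∈ lSpan Φ L q, ⁅x, y⁆ ∈ L) :
    ∀ p : Q, p ≠ 0 → ∀ q : Q,
      ∃ x ∈ L, ⁅x, p⁆ ≠ 0 ∧ ∀ y ∈ lSpan Φ L q, ⁅x, y⁆ ∈ L := by
  classical
  intro p hp q
  set qc : G → Q := fun τ => (DirectSum.decompose 𝒜 q τ : Q) with hqc
  set s : Finset G := (DirectSum.decompose 𝒜 q).support with hs
  have hqcA : ∀ τ : G, qc τ ∈ 𝒜 τ := by
    intro τ; simp only [hqc]; exact SetLike.coe_mem _
  set Dm : Submodule Φ Q :=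
    L.toSubmodule ⊓ ⨅ τ ∈ s, bracketInto L (lSpan Φ L (qc τ)) with hDmdef
  have hDm_mem : ∀ x : Q,
      x ∈ Dm ↔ (x ∈ L ∧ ∀ τ ∈ s, ∀ y ∈ lSpan Φ L (qc τ), ⁅x, y⁆ ∈ L) := by
    intro x
    simp only [hDmdef, Submodule.mem_inf, Submodule.mem_iInf, mem_bracketInto,
      LieSubalgebra.mem_toSubmodule]
  -- `Dm` is an ideal of `L`:
  have hDm_ad : ∀ x ∈ L, ∀ d ∈ Dm, ⁅x, d⁆ ∈ Dm := by
    intro x hx d hd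
    rw [hDm_mem] at hd ⊢
    refine ⟨L.lie_mem hx hd.1, fun τ hτ y hy => ?_⟩
    rw [lie_lie]
    exact sub_mem (L.lie_mem hx (hd.2 τ hτ y hy))
      (hd.2 τ hτ _ (lSpan_lie_mem L hx hy))
  -- `Dm` is graded:
  have hDm_comp : ∀ d ∈ Dm, ∀ ρ : G, (DirectSum.decompose 𝒜 d ρ : Q) ∈ Dm := by
    intro d hd ρ
    rw [hDm_mem] at hd ⊢
    refine ⟨hLgr d hd.1 ρ, fun τ hτ y hy => ?_⟩
    have h1 : ⁅(DirectSum.decompose 𝒜 d ρ : Q), y⁆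
        = ∑ ρ' ∈ (DirectSum.decompose 𝒜 y).support,
            ⁅(DirectSum.decompose 𝒜 d ρ : Q), (DirectSum.decompose 𝒜 y ρ' : Q)⁆ := by
      conv_lhs => rw [← DirectSum.sum_support_decompose 𝒜 y]
      exact map_sum (LieAlgebra.ad Φ Q _) _ _
    rw [h1]
    refine sum_mem fun ρ' _ => ?_
    rw [bc 𝒜 hbracket (SetLike.coe_mem _) d ρ]
    exact hLgr _ (hd.2 τ hτ _ (lSpan_decompose_mem 𝒜 hbracket L hLgr (hqcA τ) hy ρ')) _
  -- the "essentiality chain" lemma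
  have hESS : ∀ t : Finset G, ∀ γ : G, ∀ u : Q, u ≠ 0 → u ∈ 𝒜 γ → u ∈ L →
      ∃ δ : G, ∃ w : Q, w ≠ 0 ∧ w ∈ 𝒜 δ ∧ AdOrbit L u w ∧
        ∀ τ ∈ t, ∀ y ∈ lSpan Φ L (qc τ), ⁅w, y⁆ ∈ L := by
    intro t
    induction t using Finset.induction_on with
    | empty =>
      intro γ u h0 hA hL
      exact ⟨γ, u, h0, hA, AdOrbit.base, fun τ hτ => absurd hτ (Finset.notMem_empty τ)⟩
    | insert τ t hτt ih =>
      intro γ u h0 hA huL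
      obtain ⟨δ, w, hw0, hwA, hworb, hwprop⟩ := ih γ u h0 hA huL
      have hwL : w ∈ L := adOrbit_mem_subalg L huL hworb
      obtain ⟨β, x, hxA, hxL, hxw, hxspan⟩ := hquot δ τ w (qc τ) hwA hw0 (hqcA τ)
      refine ⟨β * δ, ⁅x, w⁆, hxw, hbracket _ _ _ _ hxA hwA, AdOrbit.step x hxL hworb, ?_⟩
      intro τ' hτ' y hy
      rw [lie_lie]
      rcases Finset.mem_insert.mp hτ' with h | h
      · subst h
        exact sub_mem (hxspan _ (lSpan_lie_mem L hwL hy)) (L.lie_mem hwL (hxspan y hy))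
      · exact sub_mem (L.lie_mem hxL (hwprop τ' h y hy))
          (hwprop τ' h _ (lSpan_lie_mem L hxL hy))
  -- pick a nonzero homogeneous component of `p`
  obtain ⟨σ, hσ⟩ : ∃ σ : G, (DirectSum.decompose 𝒜 p σ : Q) ≠ 0 := by
    by_contra hall
    push_neg at hall
    apply hp
    conv_lhs => rw [← DirectSum.sum_support_decompose 𝒜 p]
    exact Finset.sum_eq_zero fun σ _ => hall σ
  have hpσA : (DirectSum.decompose 𝒜 p σ : Q) ∈ 𝒜 σ := SetLike.coe_mem _
  -- the key step: find a homogeneous element of `Dm` not annihilating `pσ`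
  obtain ⟨α, x, hxA, hxDm, hxpσ⟩ :
      ∃ α : G, ∃ x : Q, x ∈ 𝒜 α ∧ x ∈ Dm ∧ ⁅x, (DirectSum.decompose 𝒜 p σ : Q)⁆ ≠ 0 := by
    by_contra hc
    push_neg at hc
    -- every element of `Dm` annihilates `pσ`
    have hDkill : ∀ d ∈ Dm, ⁅d, (DirectSum.decompose 𝒜 p σ : Q)⁆ = 0 := by
      intro d hd
      have h2 : ⁅(DirectSum.decompose 𝒜 p σ : Q), d⁆ = 0 := by
        conv_lhs => rw [← DirectSum.sum_support_decompose 𝒜 d]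
        have h3 : ⁅(DirectSum.decompose 𝒜 p σ : Q),
            ∑ ρ' ∈ (DirectSum.decompose 𝒜 d).support, (DirectSum.decompose 𝒜 d ρ' : Q)⁆
            = ∑ ρ' ∈ (DirectSum.decompose 𝒜 d).support,
              ⁅(DirectSum.decompose 𝒜 p σ : Q), (DirectSum.decompose 𝒜 d ρ' : Q)⁆ :=
          map_sum (LieAlgebra.ad Φ Q _) _ _
        rw [h3]
        refine Finset.sum_eq_zero fun ρ' _ => ?_
        rw [← lie_skew, hc ρ' _ (SetLike.coe_mem _) (hDm_comp d hd ρ'), neg_zero]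
      rw [← lie_skew, h2, neg_zero]
    have hDkillSpan := ann_lSpan L (fun x' hx' i hi => hDm_ad x' hx' i hi) hDkill
    obtain ⟨α, x, hxA, hxL, hxp, hxspan⟩ := hquot σ σ _ _ hpσA hσ hpσA
    have huL : ⁅x, (DirectSum.decompose 𝒜 p σ : Q)⁆ ∈ L :=
      hxspan _ (Submodule.subset_span AdOrbit.base)
    have huA : ⁅x, (DirectSum.decompose 𝒜 p σ : Q)⁆ ∈ 𝒜 (α * σ) :=
      hbracket _ _ _ _ hxA hpσA
    have hulspan : ⁅x, (DirectSum.decompose 𝒜 p σ : Q)⁆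
        ∈ lSpan Φ L (DirectSum.decompose 𝒜 p σ : Q) :=
      Submodule.subset_span (AdOrbit.step x hxL AdOrbit.base)
    obtain ⟨δ, w, hw0, hwA, hworb, hwD⟩ := hESS s (α * σ) _ hxp huA huL
    have hwL : w ∈ L := adOrbit_mem_subalg L huL hworb
    have hwDm : w ∈ Dm := (hDm_mem w).mpr ⟨hwL, hwD⟩
    have hwlspan : w ∈ lSpan Φ L (DirectSum.decompose 𝒜 p σ : Q) :=
      adOrbit_lSpan_mem L hulspan hworb
    -- the graded ideal generated by `w`
    set Z : Submodule Φ Q := Submodule.span Φ {v | GOrbit 𝒜 L w v} with hZ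
    have hZDm : Z ≤ Dm := Submodule.span_le.mpr fun v hv =>
      gOrbit_subset 𝒜 L hwDm hDm_ad hDm_comp v hv
    have hZlspan : Z ≤ lSpan Φ L (DirectSum.decompose 𝒜 p σ : Q) :=
      Submodule.span_le.mpr fun v hv =>
        gOrbit_subset 𝒜 L hwlspan (fun x' hx' i hi => lSpan_lie_mem L hx' hi)
          (fun i hi ρ => lSpan_decompose_mem 𝒜 hbracket L hLgr hpσA hi ρ) v hv
    have hZL : Z ≤ L.toSubmodule := fun v hv =>
      (LieSubalgebra.mem_toSubmodule L).mpr ((hDm_mem v).mp (hZDm hv)).1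
    have hwZ : w ∈ Z := Submodule.subset_span GOrbit.base
    have hZbot : Z ≠ ⊥ := by
      intro h
      rw [h, Submodule.mem_bot] at hwZ
      exact hw0 hwZ
    obtain ⟨a, haZ, b, hbZ, hab⟩ := hsemiprime Z hZL
      (fun x' hx' v hv => gSpan_lie_mem 𝒜 L w hx' hv)
      (fun v hv ρ => gSpan_comp_mem 𝒜 L w hv ρ) hZbot
    exact hab (hDkillSpan a (hZDm haZ) b (hZlspan hbZ))
  -- now assemble the answer
  have hxDm' := (hDm_mem x).mp hxDm
  refine ⟨x, hxDm'.1, ?_, ?_⟩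
  · intro h0
    apply hxpσ
    rw [bcl 𝒜 hbracket hxA p σ, h0]
    rw [DirectSum.decompose_zero]
    simp
  · set T : Submodule Φ Q := ⨆ τ ∈ s, lSpan Φ L (qc τ) with hT
    have hsub : lSpan Φ L q ≤ T := by
      refine Submodule.span_le.mpr fun z hz => ?_
      induction hz with
      | base =>
        have : q = ∑ τ ∈ s, qc τ := by
          simp only [hqc, hs]
          exact (DirectSum.sum_support_decompose 𝒜 q).symm
        rw [this]
        refine sum_mem fun τ hτ => ?_
        exact (le_iSup₂ (f := fun τ (_ : τ ∈ s) => lSpan Φ L (qc τ)) τ hτ)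
          (Submodule.subset_span AdOrbit.base)
      | step x' hx' hzy ih =>
        have hcl : T ≤ T.comap (LieAlgebra.ad Φ Q x' : Q →ₗ[Φ] Q) := by
          refine iSup₂_le fun τ hτ v hv => Submodule.mem_comap.mpr ?_
          exact (le_iSup₂ (f := fun τ (_ : τ ∈ s) => lSpan Φ L (qc τ)) τ hτ)
            (lSpan_lie_mem L hx' hv)
        exact hcl ih
    have hkillT : ∀ v ∈ T, ⁅x, v⁆ ∈ L := by
      intro v hv
      have h4 : T ≤ Submodule.comap (LieAlgebra.ad Φ Q x : Q →ₗ[Φ] Q) L.toSubmodule := by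
        refine iSup₂_le fun τ hτ z hz => Submodule.mem_comap.mpr ?_
        exact (LieSubalgebra.mem_toSubmodule L).mpr (hxDm'.2 τ hτ z hz)
      exact (LieSubalgebra.mem_toSubmodule L).mp (h4 hv)
    exact fun y hy => hkillT y (hsub hy)
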